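/- For all real numbers a, b and every real p with 2 ≤ p < ∞, one has |(a-b)/2|^p + |(a+b)/2|^p ≤ (1/2)(|a|^p + |b|^p). -/
import Mathlib

lemma clarkson_aux_add (x y q : ℝ) (hx : 0 ≤ x) (hy : 0 ≤ y) (hq : 1 ≤ q) :
    x ^ q + y ^ q ≤ (x + y) ^ q := by
  have h := NNReal.add_rpow_le_rpow_add x.toNNReal y.toNNReal hq
  have h' := NNReal.coe_le_coe.2 h
  push_cast [NNReal.coe_rpow, Real.coe_toNNReal _ hx, Real.coe_toNNReal _ hy] at h'
  exact h'

lemma clarkson_aux_conv (x y q : ℝ) (hx : 0 ≤ x) (hy : 0 ≤ y) (hq : 1 ≤ q) :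
    ((x + y) / 2) ^ q ≤ (x ^ q + y ^ q) / 2 := by
  have h := NNReal.rpow_arith_mean_le_arith_mean2_rpow (1/2) (1/2)
      x.toNNReal y.toNNReal (add_halves 1) hq
  have h' := NNReal.coe_le_coe.2 h
  push_cast [NNReal.coe_rpow, Real.coe_toNNReal _ hx, Real.coe_toNNReal _ hy] at h'
  calc ((x + y) / 2) ^ q = (1/2 * x + 1/2 * y) ^ q := by ring_nf
    _ ≤ 1/2 * x ^ q + 1/2 * y ^ q := h'
    _ = (x ^ q + y ^ q) / 2 := by ring

lemma clarkson_aux_sq (t q : ℝ) : (t ^ 2) ^ q = |t| ^ (2 * q) := by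
  rw [← sq_abs, ← Real.rpow_natCast |t| 2, ← Real.rpow_mul (abs_nonneg t)]
  norm_num

/-- Clarkson-type inequality, case `2 ≤ p`. -/
theorem clarkson_ge_two (a b p : ℝ) (hp : 2 ≤ p) :
    |(a - b) / 2| ^ p + |(a + b) / 2| ^ p ≤ (1 / 2) * (|a| ^ p + |b| ^ p) := by
  have hq : 1 ≤ p / 2 := by linarith
  have e1 : |(a - b) / 2| ^ p = (((a - b) / 2) ^ 2) ^ (p / 2) := by
    rw [clarkson_aux_sq]; ring_nf
  have e2 : |(a + b) / 2| ^ p = (((a + b) / 2) ^ 2) ^ (p / 2) := by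
    rw [clarkson_aux_sq]; ring_nf
  have e3 : |a| ^ p = (a ^ 2) ^ (p / 2) := by rw [clarkson_aux_sq]; ring_nf
  have e4 : |b| ^ p = (b ^ 2) ^ (p / 2) := by rw [clarkson_aux_sq]; ring_nf
  rw [e1, e2, e3, e4]
  calc (((a - b) / 2) ^ 2) ^ (p / 2) + (((a + b) / 2) ^ 2) ^ (p / 2)
      ≤ (((a - b) / 2) ^ 2 + ((a + b) / 2) ^ 2) ^ (p / 2) :=
        clarkson_aux_add _ _ _ (sq_nonneg _) (sq_nonneg _) hq
    _ = ((a ^ 2 + b ^ 2) / 2) ^ (p / 2) := by ring_nf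
    _ ≤ ((a ^ 2) ^ (p / 2) + (b ^ 2) ^ (p / 2)) / 2 :=
        clarkson_aux_conv _ _ _ (sq_nonneg _) (sq_nonneg _) hq
    _ = 1 / 2 * ((a ^ 2) ^ (p / 2) + (b ^ 2) ^ (p / 2)) := by ring
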